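/- Let T be a generalized hyperbolic operator and v ∈ E⁺ ∩ T(E⁻) non-zero. For each k ≥ 1, the series v_k = ∑_{n ∈ ℤ} T^{nk} v converges absolutely, and v_k is a periodic point of T of exact (minimal) period k. -/

import Mathlib

/-- for a non-zero transition vector v ∈ E⁺ ∩ T(E⁻) and every k ≥ 1,
the series ∑_{n ∈ ℤ} T^(nk) v converges absolutely and its sum is a periodic point of T
of exact (minimal) period k. -/
theorem stmt12 {B : Type*} [NormedAddCommGroup B] [NormedSpace ℝ B] [CompleteSpace B]
    (T : B ≃L[ℝ] B) (Em Ep : Submodule ℝ B)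
    (hEmc : IsClosed (Em : Set B)) (hEpc : IsClosed (Ep : Set B))
    (hcompl : IsCompl Em Ep)
    (hTEp : ∀ x ∈ Ep, T x ∈ Ep) (hTEm : ∀ x ∈ Em, T.symm x ∈ Em)
    (lam : ℝ) (hlam0 : 0 < lam) (hlam1 : lam < 1)
    (hcon : ∀ x ∈ Ep, ‖T x‖ ≤ lam * ‖x‖) (hexp : ∀ x ∈ Em, ‖T.symm x‖ ≤ lam * ‖x‖)
    (v : B) (hv : v ∈ Ep) (hv' : T.symm v ∈ Em) (hv0 : v ≠ 0)
    (k : ℕ) (hk : 1 ≤ k) :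
    Summable (fun n : ℤ => ‖(T ^ (n * (k : ℤ))) v‖) ∧
    (T ^ (k : ℤ)) (∑' n : ℤ, (T ^ (n * (k : ℤ))) v) = ∑' n : ℤ, (T ^ (n * (k : ℤ))) v ∧
    ∀ j : ℕ, 0 < j → j < k →
      (T ^ (j : ℤ)) (∑' n : ℤ, (T ^ (n * (k : ℤ))) v) ≠ ∑' n : ℤ, (T ^ (n * (k : ℤ))) v := by
  -- basic application lemmas
  have happ : ∀ (a b : ℤ) (x : B), (T ^ (a + b)) x = (T ^ a) ((T ^ b) x) := by
    intro a b x; rw [zpow_add]; rfl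
  have hsymm : ∀ x : B, (T ^ (-1 : ℤ)) x = T.symm x := by
    intro x; rw [zpow_neg_one]; rfl
  have hone : ∀ x : B, (T ^ (0 : ℤ)) x = x := by
    intro x; rw [zpow_zero]; rfl
  -- positive powers on Ep
  have hposn : ∀ (m : ℕ) (x : B), x ∈ Ep →
      (T ^ (m : ℤ)) x ∈ Ep ∧ ‖(T ^ (m : ℤ)) x‖ ≤ lam ^ m * ‖x‖ := by
    intro m
    induction m with
    | zero =>
      intro x hx
      rw [show ((0 : ℕ) : ℤ) = 0 from rfl, hone x]
      exact ⟨hx, by simp⟩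
    | succ m ih =>
      intro x hx
      have hrw : (T ^ ((m + 1 : ℕ) : ℤ)) x = T ((T ^ (m : ℤ)) x) := by
        rw [show ((m + 1 : ℕ) : ℤ) = 1 + (m : ℤ) by push_cast; ring, happ, zpow_one]
      obtain ⟨h1, h2⟩ := ih x hx
      constructor
      · rw [hrw]; exact hTEp _ h1
      · rw [hrw]
        calc ‖T ((T ^ (m : ℤ)) x)‖ ≤ lam * ‖(T ^ (m : ℤ)) x‖ := hcon _ h1
          _ ≤ lam * (lam ^ m * ‖x‖) := by
              exact mul_le_mul_of_nonneg_left h2 hlam0.le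
          _ = lam ^ (m + 1) * ‖x‖ := by ring
  -- negative powers on Em
  have hnegn : ∀ (m : ℕ) (x : B), x ∈ Em →
      (T ^ (-(m : ℤ))) x ∈ Em ∧ ‖(T ^ (-(m : ℤ))) x‖ ≤ lam ^ m * ‖x‖ := by
    intro m
    induction m with
    | zero =>
      intro x hx
      rw [show (-((0 : ℕ) : ℤ)) = 0 by simp, hone x]
      exact ⟨hx, by simp⟩
    | succ m ih =>
      intro x hx
      have hrw : (T ^ (-((m + 1 : ℕ) : ℤ))) x = T.symm ((T ^ (-(m : ℤ))) x) := by
        rw [show (-((m + 1 : ℕ) : ℤ)) = (-1) + (-(m : ℤ)) by push_cast; ring, happ, hsymm]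
      obtain ⟨h1, h2⟩ := ih x hx
      constructor
      · rw [hrw]; exact hTEm _ h1
      · rw [hrw]
        calc ‖T.symm ((T ^ (-(m : ℤ))) x)‖ ≤ lam * ‖(T ^ (-(m : ℤ))) x‖ := hexp _ h1
          _ ≤ lam * (lam ^ m * ‖x‖) := mul_le_mul_of_nonneg_left h2 hlam0.le
          _ = lam ^ (m + 1) * ‖x‖ := by ring
  -- membership/bounds for T^m v
  have memP : ∀ m : ℤ, 0 ≤ m → (T ^ m) v ∈ Ep ∧ ‖(T ^ m) v‖ ≤ lam ^ m.toNat * ‖v‖ := by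
    intro m hm
    lift m to ℕ using hm
    simpa using hposn m v hv
  have memM : ∀ m : ℤ, m < 0 →
      (T ^ m) v ∈ Em ∧ ‖(T ^ m) v‖ ≤ lam ^ (-(m + 1)).toNat * ‖T.symm v‖ := by
    intro m hm
    have hrw : (T ^ m) v = (T ^ (-((-(m + 1)).toNat : ℤ))) (T.symm v) := by
      rw [show (-((-(m + 1)).toNat : ℤ)) = m + 1 by omega,
        show (T ^ m) v = (T ^ (m + 1)) ((T ^ (-1 : ℤ)) v) by
          rw [← happ, show m + 1 + (-1) = m by ring], hsymm]
    rw [hrw]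
    exact hnegn _ _ hv'
  -- uniform bound
  set C : ℝ := ‖v‖ + ‖T.symm v‖ / lam with hC
  have hC0 : 0 ≤ C := by positivity
  have key : ∀ m : ℤ, ‖(T ^ m) v‖ ≤ lam ^ m.natAbs * C := by
    intro m
    rcases le_or_gt 0 m with hm | hm
    · obtain ⟨-, h2⟩ := memP m hm
      have : m.toNat = m.natAbs := by omega
      rw [this] at h2
      refine h2.trans ?_
      refine mul_le_mul_of_nonneg_left ?_ (by positivity)
      simp [hC]; positivity
    · obtain ⟨-, h2⟩ := memM m hm
      refine h2.trans ?_
      have hq : m.natAbs = (-(m + 1)).toNat + 1 := by omega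
      rw [hq]
      have : lam ^ ((-(m + 1)).toNat + 1) = lam ^ (-(m + 1)).toNat * lam := by ring
      rw [this]
      have : lam ^ (-(m + 1)).toNat * lam * C
          = lam ^ (-(m + 1)).toNat * (lam * C) := by ring
      rw [this]
      refine mul_le_mul_of_nonneg_left ?_ (by positivity)
      have hlC : lam * C = lam * ‖v‖ + ‖T.symm v‖ := by
        rw [hC]
        field_simp
      rw [hlC]
      nlinarith [norm_nonneg v, hlam0]
  -- summability of the dominant series
  have hgeo : Summable (fun n : ℕ => lam ^ n) :=
    summable_geometric_of_lt_one hlam0.le hlam1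
  have hdom : Summable (fun n : ℤ => lam ^ n.natAbs * C) := by
    refine Summable.mul_right C ?_
    refine Summable.of_nat_of_neg ?_ ?_
    · simpa using hgeo
    · simpa using hgeo
  -- Part 1 : summability
  have part1 : Summable (fun n : ℤ => ‖(T ^ (n * (k : ℤ))) v‖) := by
    refine Summable.of_nonneg_of_le (fun n => norm_nonneg _) (fun n => ?_) hdom
    refine (key _).trans ?_
    refine mul_le_mul_of_nonneg_right ?_ hC0
    refine pow_le_pow_of_le_one hlam0.le hlam1.le ?_
    rw [Int.natAbs_mul]
    calc n.natAbs = n.natAbs * 1 := (Nat.mul_one _).symm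
      _ ≤ n.natAbs * ((k : ℤ)).natAbs := by
          refine Nat.mul_le_mul_left _ ?_
          simp [Int.natAbs_natCast]
          omega
  have hF0 : Summable (fun n : ℤ => (T ^ (n * (k : ℤ))) v) := part1.of_norm
  -- shifted summable families
  have hF : ∀ c : ℤ, Summable (fun n : ℤ => (T ^ (n * (k : ℤ) + c)) v) := by
    intro c
    refine (hF0.mapL (T ^ c : B ≃L[ℝ] B).toContinuousLinearMap).congr fun n => ?_
    show (T ^ c) ((T ^ (n * (k : ℤ))) v) = _
    rw [show n * (k : ℤ) + c = c + n * (k : ℤ) by ring, happ]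
  -- Part 2 : periodicity
  have part2 : (T ^ (k : ℤ)) (∑' n : ℤ, (T ^ (n * (k : ℤ))) v)
      = ∑' n : ℤ, (T ^ (n * (k : ℤ))) v := by
    rw [ContinuousLinearEquiv.map_tsum]
    have h1 : ∀ n : ℤ, (T ^ (k : ℤ)) ((T ^ (n * (k : ℤ))) v) = (T ^ ((n + 1) * (k : ℤ))) v := by
      intro n
      rw [show (n + 1) * (k : ℤ) = (k : ℤ) + n * k by ring, happ]
    rw [tsum_congr h1]
    simpa using (Equiv.addRight (1 : ℤ)).tsum_eq (fun m : ℤ => (T ^ (m * (k : ℤ))) v)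
  refine ⟨part1, part2, ?_⟩
  -- Part 3 : minimality
  intro j hj0 hjk hj
  set jz : ℤ := (j : ℤ) with hjz
  have hjz0 : 0 < jz := by rw [hjz]; exact_mod_cast hj0
  have hjzk : jz < (k : ℤ) := by rw [hjz]; exact_mod_cast hjk
  -- the "if" families
  set G : ℤ → ℤ → B := fun c n => if 0 ≤ n then (T ^ (n * (k : ℤ) + c)) v else 0 with hG
  have hGsum : ∀ c : ℤ, Summable (G c) := by
    intro c
    refine ((hF c).indicator {n : ℤ | 0 ≤ n}).congr fun n => ?_
    rw [Set.indicator_apply]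
    rfl
  -- the continuous projection onto Ep along Em
  set P : B →L[ℝ] B :=
    Ep.subtypeL.comp (Ep.linearProjOfClosedCompl Em hcompl.symm hEpc hEmc) with hPdef
  have hPp : ∀ x ∈ Ep, P x = x := by
    intro x hx
    have h := Submodule.linearProjOfIsCompl_apply_left hcompl.symm ⟨x, hx⟩
    calc P x = ((Ep.linearProjOfIsCompl Em hcompl.symm) x : B) := rfl
      _ = x := by rw [show ((Ep.linearProjOfIsCompl Em hcompl.symm) x) = ⟨x, hx⟩ from h]
  have hPm : ∀ x ∈ Em, P x = 0 := by
    intro x hx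
    have h := Submodule.linearProjOfIsCompl_apply_right' hcompl.symm hx
    calc P x = ((Ep.linearProjOfIsCompl Em hcompl.symm) x : B) := rfl
      _ = 0 := by rw [show ((Ep.linearProjOfIsCompl Em hcompl.symm) x) = 0 from h]; rfl
  -- sign facts about exponents
  have hexpPos : ∀ (n c : ℤ), 0 ≤ n → 0 ≤ c → 0 ≤ n * (k : ℤ) + c := by
    intro n c hn hc
    have := mul_nonneg hn (show (0 : ℤ) ≤ (k : ℤ) by positivity)
    linarith
  have hexpNeg : ∀ (n c : ℤ), n < 0 → c < (k : ℤ) → n * (k : ℤ) + c < 0 := by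
    intro n c hn hc
    have h1 : n * (k : ℤ) ≤ (-1) * (k : ℤ) := by
      refine mul_le_mul_of_nonneg_right (by omega) (by positivity)
    linarith
  -- projecting the shifted sums
  have hPsum : ∀ c : ℤ, 0 ≤ c → c < (k : ℤ) →
      P (∑' n : ℤ, (T ^ (n * (k : ℤ) + c)) v) = ∑' n : ℤ, G c n := by
    intro c hc1 hc2
    rw [ContinuousLinearMap.map_tsum P (hF c)]
    refine tsum_congr fun n => ?_
    by_cases hn : 0 ≤ n
    · rw [hG]; simp only [if_pos hn]
      exact hPp _ (memP _ (hexpPos n c hn hc1)).1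
    · rw [hG]; simp only [if_neg hn]
      exact hPm _ (memM _ (hexpNeg n c (by omega) hc2)).1
  -- rewrite T^j S
  have hTjS : (T ^ jz) (∑' n : ℤ, (T ^ (n * (k : ℤ))) v)
      = ∑' n : ℤ, (T ^ (n * (k : ℤ) + jz)) v := by
    rw [ContinuousLinearEquiv.map_tsum]
    refine tsum_congr fun n => ?_
    rw [show n * (k : ℤ) + jz = jz + n * (k : ℤ) by ring, happ]
  have hS0 : (∑' n : ℤ, (T ^ (n * (k : ℤ))) v) = ∑' n : ℤ, (T ^ (n * (k : ℤ) + 0)) v :=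
    tsum_congr fun n => by rw [add_zero]
  -- step A : project the periodicity equation
  have hA : ∑' n : ℤ, G jz n = ∑' n : ℤ, G 0 n := by
    have h := congrArg (fun x => P x) hj
    rw [hTjS, hPsum jz hjz0.le hjzk] at h
    rw [hS0, hPsum 0 le_rfl (by omega)] at h
    exact h
  -- step B : apply T^{-j}
  have hB : ∑' n : ℤ, G 0 n = ∑' n : ℤ, G (-jz) n := by
    have h := congrArg (fun x => (T ^ (-jz)) x) hA
    rw [ContinuousLinearEquiv.map_tsum, ContinuousLinearEquiv.map_tsum] at h
    have h1 : ∀ n : ℤ, (T ^ (-jz)) (G jz n) = G 0 n := by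
      intro n
      rw [hG]
      by_cases hn : 0 ≤ n
      · simp only [if_pos hn]
        rw [← happ, show -jz + (n * (k : ℤ) + jz) = n * (k : ℤ) + 0 by ring]
      · simp only [if_neg hn, map_zero]
    have h2 : ∀ n : ℤ, (T ^ (-jz)) (G 0 n) = G (-jz) n := by
      intro n
      rw [hG]
      by_cases hn : 0 ≤ n
      · simp only [if_pos hn]
        rw [← happ, show -jz + (n * (k : ℤ) + 0) = n * (k : ℤ) + -jz by ring]
      · simp only [if_neg hn, map_zero]
    rw [tsum_congr h1, tsum_congr h2] at h
    exact h
  -- step C : apply the complementary projection Q = id - P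
  set Q : B →L[ℝ] B := ContinuousLinearMap.id ℝ B - P with hQdef
  have hQp : ∀ x ∈ Ep, Q x = 0 := by
    intro x hx
    rw [hQdef, ContinuousLinearMap.sub_apply, ContinuousLinearMap.id_apply, hPp x hx, sub_self]
  have hQm : ∀ x ∈ Em, Q x = x := by
    intro x hx
    rw [hQdef, ContinuousLinearMap.sub_apply, ContinuousLinearMap.id_apply, hPm x hx, sub_zero]
  have hz : Q (∑' n : ℤ, G 0 n) = Q (∑' n : ℤ, G (-jz) n) := congrArg (fun x => Q x) hB
  have hzL : Q (∑' n : ℤ, G 0 n) = 0 := by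
    rw [ContinuousLinearMap.map_tsum Q (hGsum 0)]
    have : ∀ n : ℤ, Q (G 0 n) = 0 := by
      intro n
      rw [hG]
      by_cases hn : 0 ≤ n
      · simp only [if_pos hn]
        exact hQp _ (memP _ (hexpPos n 0 hn le_rfl)).1
      · simp only [if_neg hn, map_zero]
    rw [tsum_congr this, tsum_zero]
  have hzR : Q (∑' n : ℤ, G (-jz) n) = (T ^ (-jz)) v := by
    rw [ContinuousLinearMap.map_tsum Q (hGsum (-jz))]
    have hterm : ∀ n : ℤ, Q (G (-jz) n) = if n = 0 then (T ^ (-jz)) v else 0 := by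
      intro n
      rcases lt_trichotomy n 0 with hn | hn | hn
      · rw [hG]
        simp only [if_neg (by omega : ¬ (0 : ℤ) ≤ n), map_zero,
          if_neg (by omega : ¬ n = 0)]
      · subst hn
        rw [hG]
        simp only [if_pos (le_refl (0 : ℤ)), if_pos rfl]
        rw [show (0 : ℤ) * (k : ℤ) + -jz = -jz by ring]
        exact hQm _ (memM _ (by omega)).1
      · rw [hG]
        simp only [if_pos hn.le, if_neg (by omega : ¬ n = 0)]
        refine hQp _ (memP _ ?_).1
        have h1 : (1 : ℤ) * (k : ℤ) ≤ n * (k : ℤ) := by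
          refine mul_le_mul_of_nonneg_right (by omega) (by positivity)
        linarith
    rw [tsum_congr hterm]
    exact tsum_ite_eq (0 : ℤ) (fun _ => (T ^ (-jz)) v)
  have hzero : (T ^ (-jz)) v = 0 := by rw [← hzR, ← hz, hzL]
  have : v = 0 := by
    have h := congrArg (fun x => (T ^ jz) x) hzero
    simp only [map_zero] at h
    rw [← happ, show jz + -jz = 0 by ring, hone] at h
    exact h
  exact hv0 this
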